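/- Let k be a field of characteristic p > 0, let n ≥ 0, r ≥ 0, and let f_0, …, f_r be polynomials in k[x_0, x_1, …, x_n] such that no f_i contains a nonconstant p-th power monomial with nonzero coefficient, and such that not all of the f_i are constant. Then there exist integers d_1 > d_2 > … > d_n > 0 with the following property: setting f'_i = f_i(x_0, x_1 + x_0^{d_1}, …, x_n + x_0^{d_n}) (substitute x_j ↦ x_j + x_0^{d_j} for 1 ≤ j ≤ n and x_0 ↦ x_0), there exists an index i_0 ∈ {0, …, r} such that deg(f'_i)·p^{r−i} < deg(f'_{i_0})·p^{r−i_0} for all i ≠ i_0, and p does not divide deg(f'_{i_0}). (Here deg denotes total degree.) -/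

import Mathlib

open MvPolynomial



/-- Base-`B` value of digits `v` (digit `v j` at place `B^(n-1-j)`). -/
def tval (B : ℕ) {n : ℕ} (v : Fin n → ℕ) : ℕ := ∑ j : Fin n, v j * B ^ (n - 1 - (j : ℕ))

lemma tval_succ (B : ℕ) {n : ℕ} (v : Fin (n + 1) → ℕ) :
    tval B v = tval B (v ∘ Fin.castSucc) * B + v (Fin.last n) := by
  unfold tval
  rw [Fin.sum_univ_castSucc]
  simp only [Fin.coe_castSucc, Fin.val_last, Nat.add_sub_cancel, Nat.sub_self, pow_zero, mul_one,
    Function.comp]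
  congr 1
  rw [Finset.sum_mul]
  refine Finset.sum_congr rfl fun j _ => ?_
  have hj : (j : ℕ) < n := j.isLt
  have : n - (j : ℕ) = (n - 1 - (j : ℕ)) + 1 := by omega
  rw [this, pow_succ]
  ring

lemma tval_smul (B x : ℕ) {n : ℕ} (v : Fin n → ℕ) :
    tval B (fun j => x * v j) = x * tval B v := by
  unfold tval
  rw [Finset.mul_sum]
  exact Finset.sum_congr rfl fun j _ => by ring

lemma tval_digits_inj (B : ℕ) : ∀ {n : ℕ} (v v' : Fin n → ℕ),
    (∀ j, v j < B) → (∀ j, v' j < B) → tval B v = tval B v' → ∀ j, v j = v' j := by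
  intro n
  induction n with
  | zero => intro v v' _ _ _ j; exact j.elim0
  | succ m ih =>
    intro v v' hv hv' h j
    rw [tval_succ, tval_succ] at h
    have hB : 0 < B := (Nat.zero_le _).trans_lt (hv (Fin.last m))
    have hlast : v (Fin.last m) = v' (Fin.last m) := by
      have h1 := congrArg (· % B) h
      simpa [Nat.mul_add_mod', Nat.mod_eq_of_lt (hv (Fin.last m)),
        Nat.mod_eq_of_lt (hv' (Fin.last m))] using h1
    have hS : tval B (v ∘ Fin.castSucc) = tval B (v' ∘ Fin.castSucc) := by
      rw [hlast] at h
      have := Nat.add_right_cancel h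
      exact Nat.eq_of_mul_eq_mul_right hB this
    have hc := ih (v ∘ Fin.castSucc) (v' ∘ Fin.castSucc)
      (fun j => hv _) (fun j => hv' _) hS
    induction j using Fin.lastCases with
    | last => exact hlast
    | cast i => exact hc i

/-- If `T' < T`, the `B²`-scale dominates. -/
lemma gap_lemma {B A A' T T' : ℕ} (hA' : A' < B) (hTT : T' < T) :
    A' + B * B * T' < A + B * B * T := by
  have hB : 0 < B := (Nat.zero_le _).trans_lt hA'
  have h1 : B * B * (T' + 1) ≤ B * B * T := Nat.mul_le_mul_left _ (by omega)
  have h2 : B ≤ B * B := Nat.le_mul_of_pos_left B hB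
  nlinarith

lemma core_eq {n B : ℕ} {A A' : ℕ} {V V' : Fin n → ℕ}
    (hA : A < B) (hA' : A' < B) (hV : ∀ j, V j < B) (hV' : ∀ j, V' j < B)
    (h : A + B * B * tval B V = A' + B * B * tval B V') :
    A = A' ∧ ∀ j, V j = V' j := by
  have hT : tval B V = tval B V' := by
    rcases lt_trichotomy (tval B V) (tval B V') with ht | ht | ht
    · exact absurd h (gap_lemma hA ht).ne
    · exact ht
    · exact absurd h (gap_lemma hA' ht).ne'
  refine ⟨by rw [hT] at h; omega, tval_digits_inj B V V' hV hV' hT⟩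

lemma core_lt {n p B K : ℕ} {ρ : Fin n → ℕ} {A A' : ℕ} {V V' : Fin n → ℕ}
    (hK : 1 + n * p ≤ K) (hρ : ∀ j, ρ j < p)
    (hA : A < B) (hA' : A' < B) (hV : ∀ j, V j < B) (hV' : ∀ j, V' j < B)
    (h : A + B * B * tval B V < A' + B * B * tval B V') :
    A + (∑ j, ρ j * V j) + K * B * tval B V < A' + (∑ j, ρ j * V' j) + K * B * tval B V' := by
  rcases lt_trichotomy (tval B V) (tval B V') with ht | ht | ht
  · -- dominated by the K*B scale
    have hsum : (∑ j, ρ j * V j) ≤ n * (p * B) := by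
      calc (∑ j, ρ j * V j) ≤ ∑ _j : Fin n, p * B :=
            Finset.sum_le_sum fun j _ => Nat.mul_le_mul (hρ j).le (hV j).le
        _ = n * (p * B) := by simp [Finset.sum_const, mul_comm]
    have h1 : A + (∑ j, ρ j * V j) < K * B := by
      have h3 : (1 + n * p) * B ≤ K * B := Nat.mul_le_mul_right _ hK
      have h4 : (1 + n * p) * B = B + n * (p * B) := by ring
      linarith
    calc A + (∑ j, ρ j * V j) + K * B * tval B V
        < K * B + K * B * tval B V := Nat.add_lt_add_right h1 _
      _ = K * B * (tval B V + 1) := by ring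
      _ ≤ K * B * tval B V' := Nat.mul_le_mul_left _ (by omega)
      _ ≤ A' + (∑ j, ρ j * V' j) + K * B * tval B V' := Nat.le_add_left _ _
  · -- equal tails: digits coincide
    have hdig := tval_digits_inj B V V' hV hV' ht
    have hAA : A < A' := by rw [ht] at h; omega
    have hs : (∑ j, ρ j * V j) = ∑ j, ρ j * V' j :=
      Finset.sum_congr rfl fun j _ => by rw [hdig j]
    rw [hs, ht]
    omega
  · exact absurd h (gap_lemma hA' ht).asymm

/-- The substitution `x_0 ↦ x_0`, `x_j ↦ x_j + x_0 ^ (d j)` for `1 ≤ j ≤ n`, as an algebra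
endomorphism of `k[x_0, …, x_n]`. -/
noncomputable def substShift (k : Type*) [CommSemiring k] (n : ℕ) (d : Fin n → ℕ) :
    MvPolynomial (Fin (n + 1)) k →ₐ[k] MvPolynomial (Fin (n + 1)) k :=
  aeval (Fin.cases (X 0) (fun j : Fin n => X j.succ + X 0 ^ d j))

/-- The weighted degree of an exponent vector. -/
def wdeg {N : ℕ} (c : Fin N → ℕ) (e : Fin N →₀ ℕ) : ℕ := ∑ m, c m * e m

section DegreeLemmas

variable {k : Type*} [CommSemiring k] {N : ℕ}

/-- Upper bound for the total degree of an `aeval` image. -/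
lemma totalDegree_aeval_le_wdeg {σ : Type*} (g : Fin N → MvPolynomial σ k) (c : Fin N → ℕ)
    (hg : ∀ m, (g m).totalDegree ≤ c m) (q : MvPolynomial (Fin N) k) (W : ℕ)
    (hW : ∀ e ∈ q.support, wdeg c e ≤ W) :
    (aeval g q).totalDegree ≤ W := by
  conv_lhs => rw [← q.support_sum_monomial_coeff]
  rw [map_sum]
  refine (totalDegree_finset_sum _ _).trans (Finset.sup_le fun e he => ?_)
  rw [aeval_monomial]
  refine (totalDegree_mul _ _).trans ?_
  have h1 : (algebraMap k (MvPolynomial σ k) (coeff e q)).totalDegree = 0 := by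
    rw [MvPolynomial.algebraMap_eq]; exact totalDegree_C _
  rw [h1, zero_add, Finsupp.prod_fintype _ _ fun m => pow_zero _]
  refine le_trans (totalDegree_finset_prod _ _) (le_trans ?_ (hW e he))
  unfold wdeg
  refine Finset.sum_le_sum fun m _ => ?_
  exact (totalDegree_pow _ _).trans
    ((Nat.mul_le_mul_left _ (hg m)).trans (Nat.mul_comm _ _).le)

/-- `natDegree` of the image of a multivariate polynomial under an `aeval` to `k[X]` sending each
variable to a polynomial of degree at most 1 is bounded by the total degree. -/
lemma natDegree_aeval_le_totalDegree (ν : Fin N → Polynomial k)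
    (hν : ∀ m, (ν m).natDegree ≤ 1) (q : MvPolynomial (Fin N) k) :
    (aeval ν q).natDegree ≤ q.totalDegree := by
  conv_lhs => rw [← q.support_sum_monomial_coeff]
  rw [map_sum]
  refine Polynomial.natDegree_sum_le_of_forall_le _ _ fun e he => ?_
  rw [aeval_monomial]
  refine le_trans Polynomial.natDegree_mul_le ?_
  have h1 : (algebraMap k (Polynomial k) (coeff e q)).natDegree = 0 := by
    rw [Polynomial.algebraMap_eq]; exact Polynomial.natDegree_C _
  rw [h1, zero_add]
  refine le_trans ?_ (le_totalDegree he)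
  rw [Finsupp.prod]
  refine le_trans (Polynomial.natDegree_prod_le _ _) ?_
  rw [Finsupp.sum]
  refine Finset.sum_le_sum fun m _ => ?_
  exact le_trans (Polynomial.natDegree_pow_le) (by
    calc e m * (ν m).natDegree ≤ e m * 1 := Nat.mul_le_mul_left _ (hν m)
      _ = e m := mul_one _)

/-- Value of the one-variable weighted substitution on a monomial. -/
lemma aeval_pow_monomial (c : Fin N → ℕ) (e : Fin N →₀ ℕ) (a : k) :
    aeval (fun m => (Polynomial.X : Polynomial k) ^ c m) (monomial e a)
      = Polynomial.C a * Polynomial.X ^ wdeg c e := by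
  rw [aeval_monomial, Polynomial.algebraMap_eq]
  congr 1
  rw [Finsupp.prod_fintype _ _ fun m => pow_zero _]
  have h1 : ∀ m : Fin N, ((Polynomial.X : Polynomial k) ^ c m) ^ e m
      = (Polynomial.X : Polynomial k) ^ (c m * e m) := fun m => by rw [← pow_mul]
  rw [Finset.prod_congr rfl fun m _ => h1 m, Finset.prod_pow_eq_pow_sum]
  rfl

end DegreeLemmas

section KeyLemma

variable {k : Type*} [Field k] {n : ℕ}

/-- The main degree computation: if the weighted degree has a unique strict maximum on the
support, then the total degree of the shifted polynomial is that weighted degree. -/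
lemma totalDegree_substShift_eq (d : Fin n → ℕ) (hd : ∀ j, 1 ≤ d j)
    (q : MvPolynomial (Fin (n + 1)) k) (e₀ : Fin (n + 1) →₀ ℕ) (he₀ : e₀ ∈ q.support)
    (hmax : ∀ e ∈ q.support, e ≠ e₀ →
      wdeg (Fin.cases 1 d) e < wdeg (Fin.cases 1 d) e₀) :
    (substShift k n d q).totalDegree = wdeg (Fin.cases 1 d) e₀ := by
  set c : Fin (n + 1) → ℕ := Fin.cases 1 d with hc
  refine le_antisymm ?_ ?_
  · -- upper bound
    refine totalDegree_aeval_le_wdeg _ c ?_ q _ fun e he => ?_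
    · intro m
      induction m using Fin.cases with
      | zero => simp [hc]
      | succ j =>
        simp only [Fin.cases_succ, hc]
        refine (totalDegree_add _ _).trans (max_le (by simp [hd j]) (by simp))
    · rcases eq_or_ne e e₀ with rfl | hne
      · exact le_rfl
      · exact (hmax e he hne).le
  · -- lower bound via the one-variable specialization
    set ν : Fin (n + 1) → Polynomial k := Fin.cases Polynomial.X (fun _ => 0) with hν
    have hcomp : ∀ w : MvPolynomial (Fin (n + 1)) k,
        aeval ν (substShift k n d w) = aeval (fun m => (Polynomial.X : Polynomial k) ^ c m) w := by
      intro w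
      rw [substShift, comp_aeval_apply]
      have hfun : (fun i => aeval ν ((Fin.cases (X 0)
          (fun j : Fin n => X j.succ + X 0 ^ d j) :
          Fin (n + 1) → MvPolynomial (Fin (n + 1)) k) i)) =
          fun m => (Polynomial.X : Polynomial k) ^ c m := by
        funext m
        induction m using Fin.cases with
        | zero => simp [hν, hc]
        | succ j => simp [hν, hc]
      rw [hfun]
    have hcoeff : (aeval (fun m => (Polynomial.X : Polynomial k) ^ c m) q).coeff
        (wdeg c e₀) = coeff e₀ q := by
      conv_lhs => rw [← q.support_sum_monomial_coeff, map_sum]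
      rw [Polynomial.finset_sum_coeff]
      rw [Finset.sum_congr rfl fun e (_ : e ∈ q.support) => by
        rw [aeval_pow_monomial, Polynomial.coeff_C_mul, Polynomial.coeff_X_pow]]
      rw [Finset.sum_eq_single_of_mem e₀ he₀ ?_]
      · simp
      · intro e he hne
        rw [if_neg (by exact (hmax e he hne).ne'), mul_zero]
    have hne0 : (aeval (fun m => (Polynomial.X : Polynomial k) ^ c m) q).coeff
        (wdeg c e₀) ≠ 0 := by
      rw [hcoeff]; exact mem_support_iff.mp he₀
    calc wdeg c e₀ ≤ (aeval (fun m => (Polynomial.X : Polynomial k) ^ c m) q).natDegree :=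
          Polynomial.le_natDegree_of_ne_zero hne0
      _ = (aeval ν (substShift k n d q)).natDegree := by rw [hcomp]
      _ ≤ (substShift k n d q).totalDegree := by
          refine natDegree_aeval_le_totalDegree _ ?_ _
          intro m
          induction m using Fin.cases with
          | zero => simp [hν]
          | succ j => simp [hν]

end KeyLemma


/-- Let `k` be a field of characteristic `p > 0` and let `f 0, …, f r ∈ k[x_0, …, x_n]` be
polynomials none of which contains a nonconstant `p`-th power monomial, and not all constant.
Then there exist `d 1 > ⋯ > d n > 0` such that, setting
`f' i = f i (x_0, x_1 + x_0^{d 1}, …, x_n + x_0^{d n})`, the function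
`i ↦ deg (f' i) * p ^ (r - i)` has a unique strict maximum at some `i₀`, and `p` does not divide
`deg (f' i₀)`. -/
theorem exists_shift_unique_max_degree
    (p : ℕ) (hp : p.Prime) (k : Type*) [Field k] [CharP k p]
    (n r : ℕ) (f : Fin (r + 1) → MvPolynomial (Fin (n + 1)) k)
    (hpp : ∀ i, ∀ d ∈ (f i).support, d ≠ 0 → ¬ (∀ j, p ∣ d j))
    (hnc : ∃ i, (f i).totalDegree ≠ 0) :
    ∃ d : Fin n → ℕ, (∀ i, 0 < d i) ∧ (∀ i j : Fin n, i < j → d j < d i) ∧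
      ∃ i₀ : Fin (r + 1),
        (∀ i, i ≠ i₀ →
          (substShift k n d (f i)).totalDegree * p ^ (r - (i : ℕ)) <
            (substShift k n d (f i₀)).totalDegree * p ^ (r - (i₀ : ℕ))) ∧
        ¬ p ∣ (substShift k n d (f i₀)).totalDegree := by
  classical
  have hp2 : 2 ≤ p := hp.two_le
  -- an upper bound for all exponents appearing in the `f i`
  set E : ℕ := 1 + Finset.univ.sup (fun i => (f i).totalDegree) with hE_def
  have hE0 : 0 < E := by omega
  have hE : ∀ i : Fin (r + 1), ∀ e ∈ (f i).support, ∀ m, e m < E := by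
    intro i e he m
    have h1 : e m ≤ e.sum fun _ x => x := by
      by_cases h : e m = 0
      · simp [h]
      · rw [Finsupp.sum]
        exact Finset.single_le_sum (f := fun m => e m) (fun _ _ => Nat.zero_le _)
          (Finsupp.mem_support_iff.mpr h)
    have h2 := le_totalDegree he
    have h3 : (f i).totalDegree ≤ Finset.univ.sup (fun i => (f i).totalDegree) :=
      Finset.le_sup (f := fun i => (f i).totalDegree) (Finset.mem_univ i)
    omega
  -- the base
  set B : ℕ := p ^ r * E + 1 with hB_def
  have hB0 : 0 < B := Nat.succ_pos _
  have hpr0 : 0 < p ^ r := pow_pos (by omega) r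
  have hEB : E < B := by
    have h := Nat.le_mul_of_pos_left E hpr0
    omega
  have hB2 : 2 ≤ B := by
    have h := Nat.mul_pos hpr0 hE0
    omega
  -- scaled digit bounds
  have hdig : ∀ (i : Fin (r + 1)) (e : Fin (n + 1) →₀ ℕ), e ∈ insert 0 (f i).support →
      ∀ m, p ^ (r - (i : ℕ)) * e m < B := by
    intro i e he m
    rcases Finset.mem_insert.mp he with rfl | he
    · simpa using hB0
    · have h1 : e m < E := hE i e he m
      have h2 : p ^ (r - (i : ℕ)) ≤ p ^ r := Nat.pow_le_pow_right (by omega) (by omega)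
      calc p ^ (r - (i : ℕ)) * e m ≤ p ^ r * e m := Nat.mul_le_mul_right _ h2
        _ < p ^ r * E := (Nat.mul_lt_mul_left hpr0).mpr h1
        _ < B := by omega
  have hdig1 : ∀ (i : Fin (r + 1)) (e : Fin (n + 1) →₀ ℕ), e ∈ insert 0 (f i).support →
      ∀ m, e m < B := by
    intro i e he m
    rcases Finset.mem_insert.mp he with rfl | he
    · simpa using hB0
    · exact lt_trans (hE i e he m) hEB
  -- the dominant scale
  set K : ℕ := p * (n * p + 1) with hK_def
  have hK1 : 1 + n * p ≤ K := by
    rw [hK_def]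
    calc 1 + n * p = (n * p + 1) * 1 := by ring
      _ ≤ (n * p + 1) * p := Nat.mul_le_mul_left _ (by omega)
      _ = p * (n * p + 1) := by ring
  have hK0 : 0 < K := by rw [hK_def]; positivity
  have hpK : p ≤ K := by rw [hK_def]; exact Nat.le_mul_of_pos_right p (by omega)
  -- the ρ-free comparison key
  set κf : (Fin (n + 1) →₀ ℕ) → ℕ :=
    fun e => e 0 + B * B * tval B (fun j => e j.succ) with hκ
  have hκ0 : κf 0 = 0 := by simp [hκ, tval]
  have hκpos : ∀ e : Fin (n + 1) →₀ ℕ, e ≠ 0 → 0 < κf e := by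
    intro e he
    obtain ⟨m, hm⟩ : ∃ m, e m ≠ 0 := by
      by_contra h
      push_neg at h
      exact he (Finsupp.ext fun m => h m)
    rcases Fin.eq_zero_or_eq_succ m with rfl | ⟨j, rfl⟩
    · exact Nat.lt_of_lt_of_le (Nat.pos_of_ne_zero hm) (Nat.le_add_right _ _)
    · have h1 : e j.succ * B ^ (n - 1 - (j : ℕ)) ≤ tval B (fun j => e j.succ) :=
        Finset.single_le_sum (f := fun j : Fin n => e j.succ * B ^ (n - 1 - (j : ℕ)))
          (fun _ _ => Nat.zero_le _) (Finset.mem_univ j)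
      have h2 : 0 < e j.succ * B ^ (n - 1 - (j : ℕ)) :=
        Nat.mul_pos (Nat.pos_of_ne_zero hm) (pow_pos hB0 _)
      have h3 : 0 < B * B * tval B (fun j => e j.succ) :=
        Nat.mul_pos (Nat.mul_pos hB0 hB0) (lt_of_lt_of_le h2 h1)
      exact Nat.lt_of_lt_of_le h3 (Nat.le_add_left _ _)
  -- choose the maximizing exponent of each `f i`
  have hsel : ∀ i : Fin (r + 1), ∃ e, e ∈ insert 0 (f i).support ∧
      ∀ e' ∈ insert 0 (f i).support, κf e' ≤ κf e :=
    fun i => Finset.exists_max_image _ κf (Finset.insert_nonempty _ _)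
  choose es hes1 hes2 using hsel
  -- injectivity of κf on bounded exponents
  have hκinj : ∀ e e' : Fin (n + 1) →₀ ℕ, (∀ m, e m < B) → (∀ m, e' m < B) →
      κf e = κf e' → e = e' := by
    intro e e' hb hb' h
    rw [hκ] at h
    obtain ⟨h1, h2⟩ := core_eq (hb 0) (hb' 0) (fun j => hb j.succ) (fun j => hb' j.succ) h
    ext m
    rcases Fin.eq_zero_or_eq_succ m with rfl | ⟨j, rfl⟩
    · exact h1
    · exact h2 j
  -- choose the winning index
  obtain ⟨i₀, -, hmaxi⟩ := Finset.exists_max_image (Finset.univ : Finset (Fin (r + 1)))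
    (fun i : Fin (r + 1) => p ^ (r - (i : ℕ)) * κf (es i)) Finset.univ_nonempty
  have hmax' : ∀ i : Fin (r + 1), p ^ (r - (i : ℕ)) * κf (es i) ≤ p ^ (r - (i₀ : ℕ)) * κf (es i₀) :=
    fun i => hmaxi i (Finset.mem_univ i)
  -- the winner is nonconstant
  obtain ⟨i₁, hi₁⟩ := hnc
  obtain ⟨e₁, he₁, he₁0⟩ : ∃ e ∈ (f i₁).support, e ≠ 0 := by
    by_contra h
    push_neg at h
    refine hi₁ (Nat.le_zero.mp ?_)
    rw [totalDegree]
    exact Finset.sup_le fun e he => by rw [h e he]; simp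
  have hpos₀ : 0 < κf (es i₀) := by
    have h1 : 0 < p ^ (r - (i₁ : ℕ)) * κf (es i₁) :=
      Nat.mul_pos (pow_pos (by omega) _)
        (lt_of_lt_of_le (hκpos e₁ he₁0) (hes2 i₁ e₁ (Finset.mem_insert_of_mem he₁)))
    have h2 := lt_of_lt_of_le h1 (hmax' i₁)
    exact Nat.pos_of_ne_zero fun h => by simp [h] at h2
  have hne₀ : es i₀ ≠ 0 := fun h => by rw [h, hκ0] at hpos₀; exact lt_irrefl 0 hpos₀
  have hmem₀ : es i₀ ∈ (f i₀).support := (Finset.mem_insert.mp (hes1 i₀)).resolve_left hne₀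
  -- choose the perturbation ρ
  obtain ⟨ρ, hρp, hρnd⟩ : ∃ ρ : Fin n → ℕ, (∀ j, ρ j < p) ∧
      ¬ p ∣ (es i₀ 0 + ∑ j, ρ j * es i₀ j.succ) := by
    obtain ⟨m, hm⟩ : ∃ m, ¬ p ∣ es i₀ m := not_forall.mp (hpp i₀ (es i₀) hmem₀ hne₀)
    by_cases hall : ∀ j : Fin n, p ∣ es i₀ j.succ
    · refine ⟨fun _ => 0, fun _ => show 0 < p by omega, ?_⟩
      simp only [zero_mul, Finset.sum_const_zero, add_zero]
      rcases Fin.eq_zero_or_eq_succ m with rfl | ⟨j, rfl⟩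
      · exact hm
      · exact absurd (hall j) hm
    · push_neg at hall
      obtain ⟨j₀, hj₀⟩ := hall
      by_cases hpa : p ∣ es i₀ 0
      · refine ⟨fun j => if j = j₀ then 1 else 0, fun j => by dsimp; split <;> omega, ?_⟩
        have hsum : (∑ j, (if j = j₀ then 1 else 0) * es i₀ j.succ) = es i₀ j₀.succ := by
          rw [Finset.sum_eq_single j₀]
          · simp
          · intro b _ hb; simp [hb]
          · intro h; exact absurd (Finset.mem_univ j₀) h
        rw [hsum]
        intro hdvd
        exact hj₀ ((Nat.dvd_add_right hpa).mp hdvd)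
      · exact ⟨fun _ => 0, fun _ => show 0 < p by omega, by simpa using hpa⟩
  -- the shift exponents
  set dd : Fin n → ℕ := fun j => K * B ^ (n - (j : ℕ)) + ρ j with hdd
  have hdd1 : ∀ j, 1 ≤ dd j := by
    intro j
    have := Nat.mul_pos hK0 (pow_pos hB0 (n - (j : ℕ)))
    simp only [hdd]
    omega
  -- the bridge between `wdeg` and the core normal form
  have hbridge : ∀ e : Fin (n + 1) →₀ ℕ, wdeg (Fin.cases 1 dd) e
      = e 0 + (∑ j, ρ j * e j.succ) + K * B * tval B (fun j => e j.succ) := by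
    intro e
    rw [wdeg, Fin.sum_univ_succ]
    simp only [Fin.cases_zero, Fin.cases_succ, one_mul]
    rw [Finset.sum_congr rfl (fun j (_ : j ∈ Finset.univ) =>
      show dd j * e j.succ
          = ρ j * e j.succ + K * B * (e j.succ * B ^ (n - 1 - (j : ℕ))) by
        have hj : (j : ℕ) < n := j.isLt
        have h1 : n - (j : ℕ) = (n - 1 - (j : ℕ)) + 1 := by omega
        simp only [hdd]
        rw [h1, pow_succ]
        ring)]
    rw [Finset.sum_add_distrib, tval, Finset.mul_sum]
    ring
  -- scaling the bridge
  have hscale : ∀ (x : ℕ) (e : Fin (n + 1) →₀ ℕ),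
      x * (e 0 + (∑ j, ρ j * e j.succ) + K * B * tval B (fun j => e j.succ))
      = (x * e 0) + (∑ j, ρ j * (x * e j.succ)) + K * B * tval B (fun j => x * e j.succ) := by
    intro x e
    rw [tval_smul, Finset.sum_congr rfl
      (fun j (_ : j ∈ Finset.univ) => show ρ j * (x * e j.succ) = x * (ρ j * e j.succ) by ring),
      ← Finset.mul_sum]
    ring
  have hscaleκ : ∀ (x : ℕ) (e : Fin (n + 1) →₀ ℕ),
      x * κf e = (x * e 0) + B * B * tval B (fun j => x * e j.succ) := by
    intro x e
    rw [hκ]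
    simp only []
    rw [tval_smul]
    ring
  -- the degree formula for each i
  have hdeg : ∀ i : Fin (r + 1),
      (substShift k n dd (f i)).totalDegree = wdeg (Fin.cases 1 dd) (es i) := by
    intro i
    by_cases h0 : f i = 0
    · have hz : es i = 0 := by
        have := hes1 i
        rw [h0] at this
        simpa using this
      rw [h0, map_zero, totalDegree_zero, hz]
      simp [wdeg]
    · have hmem : es i ∈ (f i).support := by
        rcases Finset.mem_insert.mp (hes1 i) with h | h
        · by_cases h0' : (0 : Fin (n + 1) →₀ ℕ) ∈ (f i).support
          · rw [h]; exact h0'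
          · exfalso
            obtain ⟨e, he⟩ : ((f i).support).Nonempty :=
              Finset.nonempty_iff_ne_empty.mpr fun hemp => h0 (support_eq_empty.mp hemp)
            rcases eq_or_ne e 0 with rfl | hne
            · exact h0' he
            · have h1 := hes2 i e (Finset.mem_insert_of_mem he)
              rw [h, hκ0] at h1
              exact absurd h1 (not_le.mpr (hκpos e hne))
        · exact h
      refine totalDegree_substShift_eq dd hdd1 (f i) (es i) hmem ?_
      intro e he hne
      have hle : κf e ≤ κf (es i) := hes2 i e (Finset.mem_insert_of_mem he)
      have hlt : κf e < κf (es i) := by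
        rcases lt_or_eq_of_le hle with h | h
        · exact h
        · exact absurd (hκinj e (es i) (hdig1 i e (Finset.mem_insert_of_mem he))
            (hdig1 i (es i) (hes1 i)) h) hne
      rw [hbridge, hbridge]
      rw [hκ] at hlt
      exact core_lt hK1 hρp (hdig1 i e (Finset.mem_insert_of_mem he) 0)
        (hdig1 i (es i) (hes1 i) 0)
        (fun j => hdig1 i e (Finset.mem_insert_of_mem he) j.succ)
        (fun j => hdig1 i (es i) (hes1 i) j.succ) hlt
  refine ⟨dd, fun j => hdd1 j, ?_, i₀, ?_, ?_⟩
  · -- strictly decreasing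
    intro i j hij
    have h1 : B ^ (n - (j : ℕ)) + 1 ≤ B ^ (n - (i : ℕ)) := by
      have h2 : B ^ (n - (j : ℕ)) < B ^ (n - (i : ℕ)) :=
        Nat.pow_lt_pow_right (by omega) (by have := j.isLt; have := i.isLt; omega)
      omega
    have h3 : K * (B ^ (n - (j : ℕ)) + 1) ≤ K * B ^ (n - (i : ℕ)) := Nat.mul_le_mul_left _ h1
    have h4 := hρp j
    simp only [hdd]
    nlinarith
  · -- unique strict maximum
    intro i hi
    rw [hdeg i, hdeg i₀, mul_comm _ (p ^ (r - (i : ℕ))), mul_comm _ (p ^ (r - (i₀ : ℕ))),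
      hbridge, hbridge, hscale, hscale]
    have hle := hmax' i
    have hlt : p ^ (r - (i : ℕ)) * κf (es i) < p ^ (r - (i₀ : ℕ)) * κf (es i₀) := by
      rcases lt_or_eq_of_le hle with h | h
      · exact h
      · exfalso
        -- from equality, deduce p-divisibility of the larger-index exponent vector
        rw [hscaleκ, hscaleκ] at h
        obtain ⟨h1, h2⟩ := core_eq (hdig i (es i) (hes1 i) 0) (hdig i₀ (es i₀) (hes1 i₀) 0)
          (fun j => hdig i (es i) (hes1 i) j.succ) (fun j => hdig i₀ (es i₀) (hes1 i₀) j.succ) h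
        have hall : ∀ m, p ^ (r - (i : ℕ)) * es i m = p ^ (r - (i₀ : ℕ)) * es i₀ m := by
          intro m
          rcases Fin.eq_zero_or_eq_succ m with rfl | ⟨j, rfl⟩
          · exact h1
          · exact h2 j
        have hvne : (i : ℕ) ≠ (i₀ : ℕ) := fun hv => hi (Fin.ext hv)
        -- the exponent vector of the larger index is a nonzero p-th power: contradiction
        rcases Nat.lt_or_ge (i : ℕ) (i₀ : ℕ) with hlt' | hge
        · have hsplit : r - (i : ℕ) = ((i₀ : ℕ) - (i : ℕ)) + (r - (i₀ : ℕ)) := by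
            have := i₀.isLt; omega
          refine hpp i₀ (es i₀) hmem₀ hne₀ fun m => ?_
          have h3 : p ^ (r - (i₀ : ℕ)) * (p ^ ((i₀ : ℕ) - (i : ℕ)) * es i m)
              = p ^ (r - (i₀ : ℕ)) * es i₀ m := by
            rw [← hall m, hsplit, pow_add]; ring
          have h4 : p ^ ((i₀ : ℕ) - (i : ℕ)) * es i m = es i₀ m :=
            Nat.eq_of_mul_eq_mul_left (pow_pos (by omega) _) h3
          rw [← h4]
          exact Dvd.dvd.mul_right (dvd_pow_self p (by omega)) _
        · have hlt'' : (i₀ : ℕ) < (i : ℕ) := by omega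
          -- es i is nonzero, hence in the support of f i
          have hesine : es i ≠ 0 := by
            intro hz
            obtain ⟨m, hm⟩ : ∃ m, es i₀ m ≠ 0 := by
              by_contra hc
              push_neg at hc
              exact hne₀ (Finsupp.ext fun m => hc m)
            have := hall m
            rw [hz] at this
            simp at this
            exact hm (by
              have hpow : 0 < p ^ (r - (i₀ : ℕ)) := pow_pos (by omega) _
              rcases this with h | h
              · omega
              · exact h)
          have hmemi : es i ∈ (f i).support :=
            (Finset.mem_insert.mp (hes1 i)).resolve_left hesine
          have hsplit : r - (i₀ : ℕ) = ((i : ℕ) - (i₀ : ℕ)) + (r - (i : ℕ)) := by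
            have := i.isLt; omega
          refine hpp i (es i) hmemi hesine fun m => ?_
          have h3 : p ^ (r - (i : ℕ)) * (p ^ ((i : ℕ) - (i₀ : ℕ)) * es i₀ m)
              = p ^ (r - (i : ℕ)) * es i m := by
            rw [hall m, hsplit, pow_add]; ring
          have h4 : p ^ ((i : ℕ) - (i₀ : ℕ)) * es i₀ m = es i m :=
            Nat.eq_of_mul_eq_mul_left (pow_pos (by omega) _) h3
          rw [← h4]
          exact Dvd.dvd.mul_right (dvd_pow_self p (by omega)) _
    rw [hscaleκ, hscaleκ] at hlt
    exact core_lt hK1 hρp (hdig i (es i) (hes1 i) 0) (hdig i₀ (es i₀) (hes1 i₀) 0)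
      (fun j => hdig i (es i) (hes1 i) j.succ) (fun j => hdig i₀ (es i₀) (hes1 i₀) j.succ) hlt
  · -- p does not divide the winning degree
    rw [hdeg i₀, hbridge]
    intro hdvd
    apply hρnd
    have hKd : p ∣ K * B * tval B (fun j => es i₀ j.succ) :=
      Dvd.dvd.mul_right (Dvd.dvd.mul_right (Dvd.intro _ rfl) B) _
    rw [add_comm] at hdvd
    exact (Nat.dvd_add_right hKd).mp hdvd
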